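/- Let P be a complex Hermitian positive semidefinite n×n matrix such that P² has all real entries. Then P has all real entries (and hence P is a real symmetric matrix). -/

import Mathlib

open Matrix
open scoped ComplexOrder

noncomputable section

/-- A Hermitian positive semidefinite complex matrix whose square has all real
entries must itself have all real entries (and hence is a real symmetric matrix). -/
theorem posSemidef_real_sq_real
    (n : ℕ) (P : Matrix (Fin n) (Fin n) ℂ) (hP : P.PosSemidef)
    (hPsq : ∀ i j, ((P * P) i j).im = 0) :
    (∀ i j, (P i j).im = 0) ∧ Pᵀ = P := by
  have hsqherm : (P * P).IsHermitian := by
    have := (hP.pow 2).isHermitian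
    rwa [pow_two] at this
  have hsqsymm : (P * P)ᵀ = P * P := by
    ext i j
    have h1 : (P * P) j i = star ((P * P) i j) := by
      conv_lhs => rw [← hsqherm]
      simp [conjTranspose_apply]
    have h2 : star ((P * P) i j) = (P * P) i j :=
      Complex.conj_eq_iff_im.mpr (hPsq i j)
    simp [transpose_apply, h1, h2]
  have hT : Pᵀ = P := by
    open scoped MatrixOrder in
    apply (CFC.sq_eq_sq_iff Pᵀ P (Matrix.nonneg_iff_posSemidef.mpr hP.transpose)
      (Matrix.nonneg_iff_posSemidef.mpr hP)).mp
    rw [pow_two, pow_two, ← transpose_mul, hsqsymm]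
  refine ⟨fun i j => ?_, hT⟩
  have hherm := hP.isHermitian
  have h1 : star (P j i) = P i j := by
    conv_rhs => rw [← hherm]
    simp [conjTranspose_apply]
  have h2 : P j i = P i j := by
    conv_rhs => rw [← hT]
    simp [transpose_apply]
  have : star (P i j) = P i j := by rw [← h2, h1, h2]
  exact Complex.conj_eq_iff_im.mp this
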